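/- (Invariant of the full strategic Perceptron model.) Let d ∈ ℕ, E = EuclideanSpace ℝ (Fin d), α > 0, w* ∈ E. Let s : ℕ → ℝ with s t ∈ {1, −1}, z : ℕ → E with s t · ⟪z t, w*⟫ ≥ 1 for all t, and x : ℕ → E. Define w : ℕ → E, predicates pos and mistake, and surrogates x̃ by: w 0 = 0; pos t ↔ ⟪x t, w t⟫ ≥ α·‖w t‖; mistake t ↔ ((pos t ∧ s t = −1) ∨ (¬ pos t ∧ s t = 1)); x̃ t = x t − (α/‖w t‖) • (w t) if s t = −1 ∧ ⟪x t, w t⟫ = α·‖w t‖ ∧ w t ≠ 0, and x̃ t = x t otherwise; w (t+1) = w t + s t • (x̃ t) if mistake t, and w (t+1) = w t otherwise. Assume for every t that x t is a best response of the agent with true point z t and budget α to the classifier w t with threshold α, i.e. for all y ∈ E: ((1 if ⟪y, w t⟫ ≥ α·‖w t‖ else 0) − ‖y − z t‖/α) ≤ ((1 if ⟪x t, w t⟫ ≥ α·‖w t‖ else 0) − ‖x t − z t‖/α). Then for every t: ⟪w t, w*⟫ ≥ 0 and s t · ⟪x̃ t, w*⟫ ≥ 1. -/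

import Mathlib

open RealInnerProductSpace

/-- Structure of a best response when it differs from the true point:
it moves along `W` to the boundary, at cost at most `α`. -/
lemma br_structure {d : ℕ} {α : ℝ} (hα : 0 < α) (W Z X : EuclideanSpace ℝ (Fin d))
    (hbr : ∀ y : EuclideanSpace ℝ (Fin d),
      ((if ⟪y, W⟫ ≥ α * ‖W‖ then (1 : ℝ) else 0) - ‖y - Z‖ / α) ≤
        ((if ⟪X, W⟫ ≥ α * ‖W‖ then (1 : ℝ) else 0) - ‖X - Z‖ / α))
    (hne : X ≠ Z) :
    W ≠ 0 ∧ ∃ c : ℝ, 0 < c ∧ c ≤ α ∧ X - Z = (c / ‖W‖) • W ∧ ⟪X, W⟫ = α * ‖W‖ := by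
  classical
  have hXZ : 0 < ‖X - Z‖ := by rwa [norm_pos_iff, sub_ne_zero]
  have hdivpos : 0 < ‖X - Z‖ / α := div_pos hXZ hα
  have h1 := hbr Z
  simp only [sub_self, norm_zero, zero_div, sub_zero] at h1
  have hXpos : ⟪X, W⟫ ≥ α * ‖W‖ := by
    by_contra h
    rw [if_neg h] at h1
    split_ifs at h1 <;> linarith
  rw [if_pos hXpos] at h1
  have hZneg : ¬ (⟪Z, W⟫ ≥ α * ‖W‖) := by
    by_contra h
    rw [if_pos h] at h1
    linarith
  rw [if_neg hZneg] at h1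
  have hXZα : ‖X - Z‖ ≤ α := by
    have := (div_le_one hα).mp (by linarith)
    exact this
  have hWne : W ≠ 0 := by
    intro h; apply hZneg; simp [h]
  have hWpos : 0 < ‖W‖ := norm_pos_iff.mpr hWne
  set D : ℝ := (α * ‖W‖ - ⟪Z, W⟫) / ‖W‖ with hD
  have hZWlt : ⟪Z, W⟫ < α * ‖W‖ := lt_of_not_ge hZneg
  have hDpos : 0 < D := div_pos (by linarith) hWpos
  have hDW : D * ‖W‖ = α * ‖W‖ - ⟪Z, W⟫ := by
    rw [hD, div_mul_cancel₀ _ hWpos.ne']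
  have hyW : ⟪Z + (D / ‖W‖) • W, W⟫ = α * ‖W‖ := by
    rw [inner_add_left, real_inner_smul_left, real_inner_self_eq_norm_sq]
    have : D / ‖W‖ * ‖W‖ ^ 2 = D * ‖W‖ := by
      field_simp
    rw [this, hDW]; ring
  have hynorm : ‖(Z + (D / ‖W‖) • W) - Z‖ = D := by
    rw [add_sub_cancel_left, norm_smul, Real.norm_eq_abs,
      abs_of_pos (div_pos hDpos hWpos)]
    field_simp
  have h2 := hbr (Z + (D / ‖W‖) • W)
  rw [if_pos hyW.ge, if_pos hXpos, hynorm] at h2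
  have hXD : ‖X - Z‖ ≤ D := by
    have h3 : ‖X - Z‖ / α ≤ D / α := by linarith
    have h4 := mul_le_mul_of_nonneg_right h3 hα.le
    rwa [div_mul_cancel₀ _ hα.ne', div_mul_cancel₀ _ hα.ne'] at h4
  have hinner_lb : D * ‖W‖ ≤ ⟪X - Z, W⟫ := by
    rw [inner_sub_left, hDW]; linarith
  have hcs : ⟪X - Z, W⟫ ≤ ‖X - Z‖ * ‖W‖ := real_inner_le_norm _ _
  have hDle : D ≤ ‖X - Z‖ := le_of_mul_le_mul_right (by linarith) hWpos
  have heq : ‖X - Z‖ = D := le_antisymm hXD hDle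
  have hinnereq : ⟪X - Z, W⟫ = ‖X - Z‖ * ‖W‖ := by
    rw [heq] at hcs ⊢
    linarith
  have hsmul : ‖W‖ • (X - Z) = ‖X - Z‖ • W := inner_eq_norm_mul_iff_real.mp hinnereq
  have hXZeq : X - Z = (D / ‖W‖) • W := by
    have := congrArg (fun v => (‖W‖)⁻¹ • v) hsmul
    simp only [smul_smul, inv_mul_cancel₀ hWpos.ne', one_smul] at this
    rw [this, heq, div_eq_inv_mul]
  refine ⟨hWne, D, hDpos, heq ▸ hXZα, hXZeq, ?_⟩
  have : ⟪X - Z, W⟫ = D * ‖W‖ := by rw [hinnereq, heq]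
  rw [inner_sub_left] at this
  linarith

open scoped Classical in
theorem strategic_perceptron_full_invariant
    (d : ℕ) (α : ℝ) (hα : 0 < α)
    (wstar : EuclideanSpace ℝ (Fin d))
    (s : ℕ → ℝ) (hs : ∀ t, s t = 1 ∨ s t = -1)
    (z : ℕ → EuclideanSpace ℝ (Fin d))
    (hzm : ∀ t, s t * ⟪z t, wstar⟫ ≥ 1)
    (x : ℕ → EuclideanSpace ℝ (Fin d))
    (w : ℕ → EuclideanSpace ℝ (Fin d))
    (pos mistake : ℕ → Prop)
    (xtilde : ℕ → EuclideanSpace ℝ (Fin d))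
    (hw0 : w 0 = 0)
    (hpos : ∀ t, pos t ↔ ⟪x t, w t⟫ ≥ α * ‖w t‖)
    (hmis : ∀ t, mistake t ↔ ((pos t ∧ s t = -1) ∨ (¬ pos t ∧ s t = 1)))
    (hxt : ∀ t, xtilde t =
      if s t = -1 ∧ ⟪x t, w t⟫ = α * ‖w t‖ ∧ w t ≠ 0 then
        x t - (α / ‖w t‖) • w t
      else x t)
    (hupd : ∀ t, w (t + 1) = if mistake t then w t + s t • xtilde t else w t)
    (hbr : ∀ t, ∀ y : EuclideanSpace ℝ (Fin d),
      ((if ⟪y, w t⟫ ≥ α * ‖w t‖ then (1 : ℝ) else 0) - ‖y - z t‖ / α) ≤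
        ((if ⟪x t, w t⟫ ≥ α * ‖w t‖ then (1 : ℝ) else 0) - ‖x t - z t‖ / α)) :
    ∀ t, ⟪w t, wstar⟫ ≥ 0 ∧ s t * ⟪xtilde t, wstar⟫ ≥ 1 := by
  have claim2 : ∀ t, ⟪w t, wstar⟫ ≥ 0 → s t * ⟪xtilde t, wstar⟫ ≥ 1 := by
    intro t hwt
    rcases hs t with hst | hst
    · -- positive label: no surrogate change
      have hxx : xtilde t = x t := by
        rw [hxt t, if_neg]
        rintro ⟨h, -, -⟩
        rw [hst] at h; norm_num at h
      rw [hxx, hst, one_mul]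
      have hz1 : (1 : ℝ) ≤ ⟪z t, wstar⟫ := by
        have := hzm t; rw [hst, one_mul] at this; exact this
      by_cases hxe : x t = z t
      · rw [hxe]; exact hz1
      · obtain ⟨hWne, c, hc0, hcα, hXZ, -⟩ :=
          br_structure hα (w t) (z t) (x t) (hbr t) hxe
        have hWpos : 0 < ‖w t‖ := norm_pos_iff.mpr hWne
        have h := congrArg (fun v => ⟪v, wstar⟫) hXZ
        simp only [inner_sub_left, real_inner_smul_left] at h
        have hnn : 0 ≤ c / ‖w t‖ * ⟪w t, wstar⟫ :=
          mul_nonneg (div_nonneg hc0.le hWpos.le) hwt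
        linarith
    · -- negative label
      have hz1 : ⟪z t, wstar⟫ ≤ -1 := by
        have := hzm t; rw [hst] at this; linarith
      rw [hst]
      rw [hxt t]
      split_ifs with hcond
      · obtain ⟨-, hxb, hWne⟩ := hcond
        have hWpos : 0 < ‖w t‖ := norm_pos_iff.mpr hWne
        -- get a representation x t - z t = (c/‖w t‖) • w t with 0 ≤ c ≤ α
        obtain ⟨c, hc0, hcα, hXZ⟩ :
            ∃ c : ℝ, 0 ≤ c ∧ c ≤ α ∧ x t - z t = (c / ‖w t‖) • (w t) := by
          by_cases hxe : x t = z t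
          · exact ⟨0, le_refl 0, hα.le, by simp [hxe]⟩
          · obtain ⟨-, c, hc0, hcα, hXZ, -⟩ :=
              br_structure hα (w t) (z t) (x t) (hbr t) hxe
            exact ⟨c, hc0.le, hcα, hXZ⟩
        have h := congrArg (fun v => ⟪v, wstar⟫) hXZ
        simp only [inner_sub_left, real_inner_smul_left] at h
        rw [inner_sub_left, real_inner_smul_left]
        have hmono : c / ‖w t‖ * ⟪w t, wstar⟫ ≤ α / ‖w t‖ * ⟪w t, wstar⟫ := by
          apply mul_le_mul_of_nonneg_right _ hwt
          gcongr
        linarith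
      · -- no surrogate change; must be x t = z t
        have hxe : x t = z t := by
          by_contra hxe
          obtain ⟨hWne, c, -, -, -, hxb⟩ :=
            br_structure hα (w t) (z t) (x t) (hbr t) hxe
          exact hcond ⟨hst, hxb, hWne⟩
        rw [hxe]; linarith
  have key : ∀ t, ⟪w t, wstar⟫ ≥ 0 := by
    intro t
    induction t with
    | zero => simp [hw0]
    | succ n ih =>
      have h2 := claim2 n ih
      rw [hupd n]
      split_ifs with h
      · rw [inner_add_left, real_inner_smul_left]; linarith
      · exact ih
  exact fun t => ⟨key t, claim2 t (key t)⟩
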